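/- Let G be a finite connected simple graph with n vertices and m edges, all of whose vertices have degree at least 1. Then for every complex number t, (1 − t²)^n · det(I_{2m} − t·U) = (1 − t²)^m · det((1 + t²)·I_n − 2t·T(G)). (This is the intermediate identity established in the proof of Theorem 4.1, with the factor (1−t²)^{m−n} cleared of negative exponents.) -/

import Mathlib

open Matrix SimpleGraph Polynomial

/-- The matrix `T(G)`: `T u v = 1 / deg u` if `(u,v)` is a dart of `G`, else `0`. -/
noncomputable def quantumT {V : Type*} [Fintype V] (G : SimpleGraph V)
    [DecidableRel G.Adj] : Matrix V V ℂ :=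
  fun u v => if G.Adj u v then (1 : ℂ) / (G.degree u : ℂ) else 0

/-- The transition matrix `U` of the discrete-time quantum walk on `G`, indexed by darts:
`U e f = 2 / deg (t f)` if `t f = o e` and `f ≠ e⁻¹`, `U e f = 2 / deg (t f) - 1` if
`f = e⁻¹`, and `0` otherwise. -/
noncomputable def quantumU {V : Type*} [Fintype V] (G : SimpleGraph V)
    [DecidableRel G.Adj] [DecidableEq V] : Matrix G.Dart G.Dart ℂ :=
  fun e f =>
    if f.toProd.2 = e.toProd.1 ∧ f ≠ e.symm then (2 : ℂ) / (G.degree f.toProd.2 : ℂ)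
    else if f = e.symm then (2 : ℂ) / (G.degree f.toProd.2 : ℂ) - 1
    else 0

section Aux

variable {V : Type*} [Fintype V] [DecidableEq V] (G : SimpleGraph V) [DecidableRel G.Adj]

/-- The dart-reversal (flip) matrix. -/
def qJ (R : Type*) [CommRing R] : Matrix G.Dart G.Dart R :=
  fun e f => if f = e.symm then 1 else 0

/-- The origin-incidence matrix. -/
noncomputable def qP : Matrix G.Dart V ℂ :=
  fun e v => if e.toProd.1 = v then 1 else 0

/-- The weighted terminus-incidence matrix. -/
noncomputable def qQ : Matrix V G.Dart ℂ :=
  fun v f => if f.toProd.2 = v then 1 / (G.degree v : ℂ) else 0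

/-- The orientation sign matrix. -/
noncomputable def qEps (R : Type*) [CommRing R] : Matrix G.Dart G.Dart R :=
  Matrix.diagonal (fun d =>
    if Fintype.equivFin V d.toProd.1 < Fintype.equivFin V d.toProd.2 then 1 else -1)

variable {R : Type*} [CommRing R]

lemma qJ_mul_qJ : qJ G R * qJ G R = 1 := by
  ext e f
  simp only [Matrix.mul_apply, qJ, ite_mul, one_mul, zero_mul]
  rw [Finset.sum_ite_eq' Finset.univ e.symm (fun g => if f = g.symm then (1 : R) else 0)]
  simp [Matrix.one_apply, eq_comm]

omit [DecidableRel G.Adj] in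
lemma qEps_entry (e : G.Dart) :
    (if Fintype.equivFin V e.toProd.1 < Fintype.equivFin V e.toProd.2 then (1 : R) else -1) *
      (if Fintype.equivFin V e.symm.toProd.1 < Fintype.equivFin V e.symm.toProd.2
        then (1 : R) else -1) = -1 := by
  have hne : Fintype.equivFin V e.toProd.1 ≠ Fintype.equivFin V e.toProd.2 :=
    fun h => e.fst_ne_snd ((Fintype.equivFin V).injective h)
  rcases lt_or_gt_of_ne hne with h | h
  · simp [Dart.symm_toProd, h, asymm h]
  · simp [Dart.symm_toProd, h, asymm h]

lemma qEps_mul_qEps : qEps G R * qEps G R = 1 := by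
  rw [qEps, Matrix.diagonal_mul_diagonal]
  have : (fun d : G.Dart =>
      (if Fintype.equivFin V d.toProd.1 < Fintype.equivFin V d.toProd.2 then (1 : R) else -1) *
        (if Fintype.equivFin V d.toProd.1 < Fintype.equivFin V d.toProd.2 then (1 : R) else -1))
      = fun _ => (1 : R) := by
    funext d
    by_cases h : Fintype.equivFin V d.toProd.1 < Fintype.equivFin V d.toProd.2 <;> simp [h]
  rw [this, Matrix.diagonal_one]

lemma qEps_conj : qEps G R * qJ G R * qEps G R = -(qJ G R) := by
  ext e f
  rw [qEps, Matrix.mul_diagonal, Matrix.diagonal_mul]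
  simp only [qJ, Matrix.neg_apply]
  by_cases h : f = e.symm
  · rw [if_pos h, mul_one, h]
    exact qEps_entry G e
  · simp [h]

lemma det_one_add_X_smul_qJ :
    ((1 : Matrix G.Dart G.Dart ℂ[X]) + (X : ℂ[X]) • qJ G ℂ[X]).det
      = (1 - X ^ 2 : ℂ[X]) ^ G.edgeFinset.card := by
  set J : Matrix G.Dart G.Dart ℂ[X] := qJ G ℂ[X] with hJ
  set p : ℂ[X] := ((1 : Matrix G.Dart G.Dart ℂ[X]) + (X : ℂ[X]) • J).det with hp
  set q : ℂ[X] := (1 - X ^ 2 : ℂ[X]) ^ G.edgeFinset.card with hq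
  have hprod : ((1 : Matrix G.Dart G.Dart ℂ[X]) + (X : ℂ[X]) • J) *
      ((1 : Matrix G.Dart G.Dart ℂ[X]) - (X : ℂ[X]) • J) = (1 - X ^ 2 : ℂ[X]) • 1 := by
    have h2 := (Commute.one_left ((X : ℂ[X]) • J)).sq_sub_sq
    rw [one_pow, _root_.smul_pow, pow_two J, hJ, qJ_mul_qJ] at h2
    rw [← h2, sub_smul, one_smul]
  have heps : ((1 : Matrix G.Dart G.Dart ℂ[X]) - (X : ℂ[X]) • J)
      = qEps G ℂ[X] * ((1 : Matrix G.Dart G.Dart ℂ[X]) + (X : ℂ[X]) • J) * qEps G ℂ[X] := by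
    have h3 : qEps G ℂ[X] * ((1 : Matrix G.Dart G.Dart ℂ[X]) + (X : ℂ[X]) • J) * qEps G ℂ[X]
        = qEps G ℂ[X] * qEps G ℂ[X] + (X : ℂ[X]) • (qEps G ℂ[X] * J * qEps G ℂ[X]) := by
      rw [Matrix.mul_add, Matrix.mul_one, Matrix.add_mul, Matrix.mul_smul, Matrix.smul_mul]
    rw [h3, qEps_mul_qEps, hJ, qEps_conj, smul_neg, ← sub_eq_add_neg]
  have hee : (qEps G ℂ[X]).det * (qEps G ℂ[X]).det = 1 := by
    rw [← Matrix.det_mul, qEps_mul_qEps, Matrix.det_one]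
  have h1 : ((1 : Matrix G.Dart G.Dart ℂ[X]) - (X : ℂ[X]) • J).det = p := by
    rw [heps, Matrix.det_mul, Matrix.det_mul, mul_right_comm, hee, one_mul, hp]
  have hpp : p * p = q * q := by
    calc p * p = ((1 : Matrix G.Dart G.Dart ℂ[X]) + (X : ℂ[X]) • J).det *
        ((1 : Matrix G.Dart G.Dart ℂ[X]) - (X : ℂ[X]) • J).det := by rw [h1, hp]
    _ = (((1 : Matrix G.Dart G.Dart ℂ[X]) + (X : ℂ[X]) • J) *
        ((1 : Matrix G.Dart G.Dart ℂ[X]) - (X : ℂ[X]) • J)).det := (Matrix.det_mul _ _).symm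
    _ = ((1 - X ^ 2 : ℂ[X]) • (1 : Matrix G.Dart G.Dart ℂ[X])).det := by rw [hprod]
    _ = (1 - X ^ 2 : ℂ[X]) ^ (Fintype.card G.Dart) := by
        rw [Matrix.det_smul, Matrix.det_one, mul_one]
    _ = q * q := by
        rw [hq, G.dart_card_eq_twice_card_edges, two_mul, pow_add]
  have hcases : p = q ∨ p = -q := by
    have h4 : (p - q) * (p + q) = 0 := by
      have : (p - q) * (p + q) = p * p - q * q := by ring
      rw [this, hpp, sub_self]
    rcases mul_eq_zero.1 h4 with h5 | h5
    · exact Or.inl (sub_eq_zero.1 h5)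
    · exact Or.inr (eq_neg_of_add_eq_zero_left h5)
  have hp0 : p.eval 0 = 1 := by
    rw [hp, ← coe_evalRingHom, RingHom.map_det]
    have : ((1 : Matrix G.Dart G.Dart ℂ[X]) + (X : ℂ[X]) • J).map (evalRingHom 0)
        = (1 : Matrix G.Dart G.Dart ℂ) := by
      ext e f
      simp [Matrix.map_apply, Matrix.add_apply, Matrix.smul_apply, Matrix.one_apply, hJ, qJ,
        apply_ite (eval (0 : ℂ)), smul_eq_mul]
    rw [RingHom.mapMatrix_apply, this, Matrix.det_one]
  have hq0 : q.eval 0 = 1 := by simp [hq]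
  rcases hcases with h | h
  · exact h
  · exfalso
    rw [h] at hp0
    rw [eval_neg, hq0] at hp0
    norm_num at hp0

lemma det_one_add_smul_qJ (t : ℂ) :
    ((1 : Matrix G.Dart G.Dart ℂ) + t • qJ G ℂ).det = (1 - t ^ 2) ^ G.edgeFinset.card := by
  have h := congrArg (eval t) (det_one_add_X_smul_qJ G)
  rw [← coe_evalRingHom, RingHom.map_det, RingHom.mapMatrix_apply] at h
  have hm : ((1 : Matrix G.Dart G.Dart ℂ[X]) + (X : ℂ[X]) • qJ G ℂ[X]).map (evalRingHom t)
      = (1 : Matrix G.Dart G.Dart ℂ) + t • qJ G ℂ := by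
    ext e f
    simp [Matrix.map_apply, Matrix.add_apply, Matrix.smul_apply, Matrix.one_apply, qJ,
      apply_ite (eval t), smul_eq_mul]
  rw [hm] at h
  simpa using h

lemma dart_sum_pair (v u : V) (c : ℂ) :
    (∑ f : G.Dart, if f.toProd = (v, u) then c else 0) = if G.Adj v u then c else 0 := by
  by_cases h : G.Adj v u
  · rw [if_pos h, Finset.sum_eq_single (⟨(v, u), h⟩ : G.Dart)]
    · rw [if_pos rfl]
    · intro f _ hne
      exact if_neg fun hf => hne (SimpleGraph.Dart.ext _ _ hf)
    · intro habs
      exact absurd (Finset.mem_univ _) habs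
  · rw [if_neg h]
    refine Finset.sum_eq_zero ?_
    rintro ⟨⟨a, b⟩, hab⟩ _
    refine if_neg fun hf => ?_
    simp only [Prod.mk.injEq] at hf
    exact h (hf.1 ▸ hf.2 ▸ hab)

lemma sum_dart_snd (u : V) :
    (∑ f : G.Dart, if f.toProd.2 = u then (1 : ℂ) else 0) = (G.degree u : ℂ) := by
  rw [Finset.sum_boole]
  congr 1
  have hcard : (Finset.univ.filter fun d : G.Dart => d.toProd.2 = u)
      = (Finset.univ.filter fun d : G.Dart => d.toProd.1 = u).image Dart.symm := by
    ext d
    simp only [Finset.mem_filter, Finset.mem_univ, true_and, Finset.mem_image]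
    constructor
    · intro hd
      exact ⟨d.symm, by simp [Dart.symm_toProd, hd], d.symm_symm⟩
    · rintro ⟨e, he, rfl⟩
      simpa [Dart.symm_toProd] using he
  rw [hcard, Finset.card_image_of_injective _ (fun a b hab => by
    rw [← a.symm_symm, ← b.symm_symm, hab])]
  exact G.dart_fst_fiber_card_eq_degree u

lemma qQ_mul_qP : qQ G * qP G = quantumT G := by
  ext u v
  simp only [Matrix.mul_apply, qQ, qP, quantumT]
  have hcomb : ∀ f : G.Dart,
      (if f.toProd.2 = u then 1 / (G.degree u : ℂ) else 0) *
        (if f.toProd.1 = v then (1 : ℂ) else 0)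
      = if f.toProd = (v, u) then 1 / (G.degree u : ℂ) else 0 := by
    intro f
    by_cases h1 : f.toProd.2 = u <;> by_cases h2 : f.toProd.1 = v <;>
      simp [h1, h2, Prod.ext_iff]
  rw [Finset.sum_congr rfl fun f _ => hcomb f, dart_sum_pair]
  by_cases h : G.Adj u v
  · rw [if_pos (G.adj_symm h), if_pos h]
  · rw [if_neg (fun hh => h (G.adj_symm hh)), if_neg h]

lemma qJ_mul_qP : qJ G ℂ * qP G = Matrix.of fun f v => if f.toProd.2 = v then (1 : ℂ) else 0 := by
  ext f v
  simp only [Matrix.mul_apply, qJ, qP, ite_mul, one_mul, zero_mul]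
  rw [Finset.sum_ite_eq' Finset.univ f.symm (fun g => if g.toProd.1 = v then (1 : ℂ) else 0)]
  simp [Dart.symm_toProd]

lemma qQ_mul_qJ_mul_qP (hdeg : ∀ v : V, 1 ≤ G.degree v) :
    qQ G * (qJ G ℂ * qP G) = 1 := by
  rw [qJ_mul_qP]
  ext u v
  simp only [Matrix.mul_apply, qQ, Matrix.of_apply]
  by_cases h3 : u = v
  · subst h3
    rw [Matrix.one_apply_eq]
    have hdegne : (G.degree u : ℂ) ≠ 0 := by
      exact_mod_cast Nat.one_le_iff_ne_zero.mp (hdeg u)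
    have hcomb : ∀ f : G.Dart,
        (if f.toProd.2 = u then 1 / (G.degree u : ℂ) else 0) *
          (if f.toProd.2 = u then (1 : ℂ) else 0)
        = (1 / (G.degree u : ℂ)) * (if f.toProd.2 = u then (1 : ℂ) else 0) := by
      intro f
      by_cases h : f.toProd.2 = u <;> simp [h]
    rw [Finset.sum_congr rfl fun f _ => hcomb f, ← Finset.mul_sum, sum_dart_snd,
      one_div, inv_mul_cancel₀ hdegne]
  · rw [Matrix.one_apply_ne h3]
    refine Finset.sum_eq_zero fun f _ => ?_
    by_cases h1 : f.toProd.2 = u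
    · by_cases h2 : f.toProd.2 = v
      · exact absurd (h1.symm.trans h2) h3
      · simp [h1, h2, h3]
    · simp [h1]

lemma one_sub_smul_quantumU (t : ℂ) :
    (1 : Matrix G.Dart G.Dart ℂ) - t • quantumU G
      = ((1 : Matrix G.Dart G.Dart ℂ) + t • qJ G ℂ) - ((2 * t) • qP G) * qQ G := by
  have hPQ : qP G * qQ G
      = Matrix.of fun e f => if f.toProd.2 = e.toProd.1 then 1 / (G.degree e.toProd.1 : ℂ) else 0 := by
    ext e f
    simp only [Matrix.mul_apply, qP, qQ, ite_mul, one_mul, zero_mul]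
    rw [Finset.sum_ite_eq Finset.univ e.toProd.1
      (fun v => if f.toProd.2 = v then 1 / (G.degree v : ℂ) else 0)]
    simp
  rw [Matrix.smul_mul, hPQ]
  ext e f
  simp only [Matrix.sub_apply, Matrix.add_apply, Matrix.smul_apply, Matrix.one_apply,
    quantumU, qJ, smul_eq_mul, Matrix.of_apply]
  by_cases h1 : f = e.symm
  · have h2 : f.toProd.2 = e.toProd.1 := by simp [h1]
    have hne : ¬(e = f) := by
      intro hef
      exact Dart.symm_ne e (by rw [← h1, ← hef])
    rw [if_neg hne, if_neg (fun hc : f.toProd.2 = e.toProd.1 ∧ f ≠ e.symm => hc.2 h1),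
      if_pos h1, if_pos h1, if_pos h2, h2]
    ring
  · by_cases h2 : f.toProd.2 = e.toProd.1
    · have hne : ¬(e = f) := by
        rintro rfl
        exact e.fst_ne_snd h2.symm
      rw [if_pos (show f.toProd.2 = e.toProd.1 ∧ f ≠ e.symm from ⟨h2, h1⟩), if_neg hne,
        if_neg h1, if_pos h2, h2]
      ring
    · have hh : ¬(f.toProd.2 = e.toProd.1 ∧ f ≠ e.symm) := fun hc => h2 hc.1
      rw [if_neg hh, if_neg h1, if_neg h1, if_neg h2]
      ring

lemma core_identity (hdeg : ∀ v : V, 1 ≤ G.degree v) (t : ℂ) (h : (1 : ℂ) - t ^ 2 ≠ 0) :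
    (1 - t ^ 2) ^ (Fintype.card V) *
        ((1 : Matrix G.Dart G.Dart ℂ) - t • quantumU G).det =
      (1 - t ^ 2) ^ G.edgeFinset.card *
        ((1 + t ^ 2) • (1 : Matrix V V ℂ) - (2 * t) • quantumT G).det := by
  set J : Matrix G.Dart G.Dart ℂ := qJ G ℂ with hJ
  set P : Matrix G.Dart V ℂ := qP G with hPd
  set Q : Matrix V G.Dart ℂ := qQ G with hQd
  set R : Matrix G.Dart G.Dart ℂ := ((1 - t ^ 2)⁻¹) • ((1 : Matrix G.Dart G.Dart ℂ) - t • J)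
    with hRd
  have hprod : ((1 : Matrix G.Dart G.Dart ℂ) + t • J) *
      ((1 : Matrix G.Dart G.Dart ℂ) - t • J) = (1 - t ^ 2) • 1 := by
    have h2 := (Commute.one_left (t • J)).sq_sub_sq
    rw [one_pow, _root_.smul_pow, pow_two J, hJ, qJ_mul_qJ] at h2
    rw [← h2, sub_smul, one_smul]
  have hR : ((1 : Matrix G.Dart G.Dart ℂ) + t • J) * R = 1 := by
    rw [hRd, Matrix.mul_smul, hprod, smul_smul, inv_mul_cancel₀ h, one_smul]
  have hkey : (1 : Matrix G.Dart G.Dart ℂ) - t • quantumU G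
      = ((1 : Matrix G.Dart G.Dart ℂ) + t • J) *
        ((1 : Matrix G.Dart G.Dart ℂ) - (R * ((2 * t) • P)) * Q) := by
    rw [Matrix.mul_sub, Matrix.mul_one, ← Matrix.mul_assoc, ← Matrix.mul_assoc, hR,
      Matrix.one_mul, one_sub_smul_quantumU]
  have hQRP : Q * (R * ((2 * t) • P))
      = ((2 * t) * (1 - t ^ 2)⁻¹) • (quantumT G - t • (1 : Matrix V V ℂ)) := by
    have hx : R * ((2 * t) • P) = ((2 * t) * (1 - t ^ 2)⁻¹) • (P - t • (J * P)) := by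
      rw [hRd, Matrix.smul_mul, Matrix.mul_smul, smul_smul, Matrix.sub_mul, Matrix.one_mul,
        Matrix.smul_mul, mul_comm ((1 - t ^ 2)⁻¹) (2 * t)]
    rw [hx, Matrix.mul_smul, Matrix.mul_sub, Matrix.mul_smul, hQd, hPd, hJ, qQ_mul_qP,
      qQ_mul_qJ_mul_qP G hdeg]
  have hdet1 : ((1 : Matrix G.Dart G.Dart ℂ) - t • quantumU G).det
      = ((1 : Matrix G.Dart G.Dart ℂ) + t • J).det *
        ((1 : Matrix V V ℂ) - Q * (R * ((2 * t) • P))).det := by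
    rw [hkey, Matrix.det_mul, Matrix.det_one_sub_mul_comm]
  have hsm : (1 - t ^ 2) ^ (Fintype.card V) *
      ((1 : Matrix V V ℂ) - Q * (R * ((2 * t) • P))).det
      = ((1 + t ^ 2) • (1 : Matrix V V ℂ) - (2 * t) • quantumT G).det := by
    rw [← Matrix.det_smul, hQRP]
    congr 1
    have hc : (1 - t ^ 2) * (2 * t * (1 - t ^ 2)⁻¹) = 2 * t := by
      field_simp
    rw [smul_sub, smul_smul, hc]
    module
  rw [hdet1, det_one_add_smul_qJ G t, ← hsm]
  ring

end Aux

theorem stmt2 {V : Type*} [Fintype V] [DecidableEq V] (G : SimpleGraph V)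
    [DecidableRel G.Adj] (hconn : G.Connected) (hdeg : ∀ v : V, 1 ≤ G.degree v)
    (t : ℂ) :
    (1 - t ^ 2) ^ (Fintype.card V) *
        ((1 : Matrix G.Dart G.Dart ℂ) - t • quantumU G).det =
      (1 - t ^ 2) ^ G.edgeFinset.card *
        ((1 + t ^ 2) • (1 : Matrix V V ℂ) - (2 * t) • quantumT G).det := by
  have hinf : ({s : ℂ | (1 : ℂ) - s ^ 2 ≠ 0}).Infinite := by
    have hsub : {s : ℂ | ¬((1 : ℂ) - s ^ 2 ≠ 0)} ⊆ {1, -1} := by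
      intro s hs
      simp only [Set.mem_setOf_eq, not_not] at hs
      have h2 : (s - 1) * (s + 1) = 0 := by linear_combination -hs
      rcases mul_eq_zero.1 h2 with h3 | h3
      · exact Or.inl (sub_eq_zero.1 h3)
      · exact Or.inr (eq_neg_of_add_eq_zero_left h3)
    have hfin : {s : ℂ | ¬((1 : ℂ) - s ^ 2 ≠ 0)}.Finite :=
      ((Set.finite_singleton (1 : ℂ)).insert (-1)).subset (by
        intro s hs
        rcases hsub hs with h | h
        · exact Set.mem_insert_iff.2 (Or.inr (by simp [h]))
        · exact Set.mem_insert_iff.2 (Or.inl h))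
    have := hfin.infinite_compl
    simpa [Set.compl_setOf, not_not] using this
  set A : Matrix G.Dart G.Dart ℂ[X] := 1 - (X : ℂ[X]) • (quantumU G).map C with hA
  set B : Matrix V V ℂ[X] :=
    (1 + (X : ℂ[X]) ^ 2) • 1 - ((2 : ℂ[X]) * X) • (quantumT G).map C with hB
  have hmapA : ∀ s : ℂ, A.map (eval s) = 1 - s • quantumU G := by
    intro s
    ext e f
    simp [hA, Matrix.map_apply, Matrix.sub_apply, Matrix.smul_apply, Matrix.one_apply,
      apply_ite (eval s), smul_eq_mul]
    exact mul_comm _ _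
  have hmapB : ∀ s : ℂ,
      B.map (eval s) = (1 + s ^ 2) • (1 : Matrix V V ℂ) - (2 * s) • quantumT G := by
    intro s
    ext u v
    by_cases huv : u = v <;>
      simp [hB, huv, Matrix.map_apply, Matrix.sub_apply, Matrix.smul_apply, Matrix.one_apply,
        smul_eq_mul]
  have hpoly : (1 - X ^ 2 : ℂ[X]) ^ (Fintype.card V) * A.det
      = (1 - X ^ 2 : ℂ[X]) ^ G.edgeFinset.card * B.det := by
    apply Polynomial.eq_of_infinite_eval_eq
    refine hinf.mono fun s hs => ?_
    simp only [Set.mem_setOf_eq] at hs ⊢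
    rw [eval_mul, eval_mul, eval_pow, eval_pow, ← coe_evalRingHom, RingHom.map_det,
      RingHom.map_det, RingHom.mapMatrix_apply, RingHom.mapMatrix_apply, coe_evalRingHom,
      hmapA, hmapB]
    simp only [eval_sub, eval_one, eval_pow, eval_X]
    exact core_identity G hdeg s hs
  have hev := congrArg (eval t) hpoly
  rw [eval_mul, eval_mul, eval_pow, eval_pow, ← coe_evalRingHom, RingHom.map_det,
    RingHom.map_det, RingHom.mapMatrix_apply, RingHom.mapMatrix_apply, coe_evalRingHom,
    hmapA, hmapB] at hev
  simpa using hev
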